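/- For d ≥ 1, if E ⊆ ℝ^d is a universal differentiability set (i.e., every Lipschitz function f : ℝ^d → ℝ has a point of Fréchet differentiability in E), then the Hausdorff dimension of E is at least one. -/

import Mathlib

open Set MeasureTheory Filter
open scoped ENNReal NNReal Topology

noncomputable def rbd (G : Set ℝ) (x : ℝ) : ℝ := sInf (Gᶜ ∩ Set.Ici x)
noncomputable def lbd (G : Set ℝ) (x : ℝ) : ℝ := sSup (Gᶜ ∩ Set.Iic x)

section comp
variable {G : Set ℝ} {x : ℝ}

lemma rbd_aux (hfin : volume G ≠ ⊤) : (Gᶜ ∩ Set.Ici x).Nonempty := by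
  by_contra h
  rw [Set.not_nonempty_iff_eq_empty, ← Set.disjoint_iff_inter_eq_empty,
    Set.disjoint_compl_left_iff_subset] at h
  have := measure_mono (μ := volume) h
  rw [Real.volume_Ici] at this
  exact hfin (top_le_iff.mp this)

lemma lbd_aux (hfin : volume G ≠ ⊤) : (Gᶜ ∩ Set.Iic x).Nonempty := by
  by_contra h
  rw [Set.not_nonempty_iff_eq_empty, ← Set.disjoint_iff_inter_eq_empty,
    Set.disjoint_compl_left_iff_subset] at h
  have := measure_mono (μ := volume) h
  rw [Real.volume_Iic] at this
  exact hfin (top_le_iff.mp this)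

lemma rbd_mem (hG : IsOpen G) (hfin : volume G ≠ ⊤) : rbd G x ∈ Gᶜ ∩ Set.Ici x :=
  IsClosed.csInf_mem (hG.isClosed_compl.inter isClosed_Ici) (rbd_aux hfin)
    ⟨x, fun _ ht => ht.2⟩

lemma lbd_mem (hG : IsOpen G) (hfin : volume G ≠ ⊤) : lbd G x ∈ Gᶜ ∩ Set.Iic x :=
  IsClosed.csSup_mem (hG.isClosed_compl.inter isClosed_Iic) (lbd_aux hfin)
    ⟨x, fun _ ht => ht.2⟩

lemma lt_rbd (hG : IsOpen G) (hfin : volume G ≠ ⊤) (hx : x ∈ G) : x < rbd G x := by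
  rcases rbd_mem hG hfin (x := x) with ⟨h1, h2⟩
  rcases (Set.mem_Ici.mp h2).lt_or_eq with h | h
  · exact h
  · exact absurd (h ▸ hx) h1

lemma lbd_lt (hG : IsOpen G) (hfin : volume G ≠ ⊤) (hx : x ∈ G) : lbd G x < x := by
  rcases lbd_mem hG hfin (x := x) with ⟨h1, h2⟩
  rcases (Set.mem_Iic.mp h2).lt_or_eq with h | h
  · exact h
  · exact absurd (h.symm ▸ hx) h1

lemma Ioo_lbd_rbd_subset (hG : IsOpen G) (hfin : volume G ≠ ⊤) : Set.Ioo (lbd G x) (rbd G x) ⊆ G := by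
  intro t ht
  by_contra htG
  rcases le_total x t with h | h
  · exact absurd (csInf_le (s := Gᶜ ∩ Set.Ici x) ⟨x, fun _ hu => hu.2⟩ ⟨htG, h⟩) (not_le.mpr ht.2)
  · exact absurd (le_csSup (s := Gᶜ ∩ Set.Iic x) ⟨x, fun _ hu => hu.2⟩ ⟨htG, h⟩) (not_le.mpr ht.1)

lemma rbd_const (hG : IsOpen G) (hfin : volume G ≠ ⊤) {z : ℝ} (hz : z ∈ Set.Ioo (lbd G x) (rbd G x)) : rbd G z = rbd G x := by
  refine le_antisymm (csInf_le ⟨z, fun _ hu => hu.2⟩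
    ⟨(rbd_mem hG hfin (x := x)).1, le_of_lt hz.2⟩) ?_
  refine le_csInf (rbd_aux hfin (x := z)) fun t ht => ?_
  by_contra hlt
  push_neg at hlt
  exact ht.1 (Ioo_lbd_rbd_subset hG hfin ⟨lt_of_lt_of_le hz.1 ht.2, hlt⟩)

lemma lbd_const (hG : IsOpen G) (hfin : volume G ≠ ⊤) {z : ℝ} (hz : z ∈ Set.Ioo (lbd G x) (rbd G x)) : lbd G z = lbd G x := by
  refine le_antisymm ?_ (le_csSup ⟨z, fun _ hu => hu.2⟩
    ⟨(lbd_mem hG hfin (x := x)).1, le_of_lt hz.1⟩)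
  refine csSup_le (lbd_aux hfin (x := z)) fun t ht => ?_
  by_contra hlt
  push_neg at hlt
  exact ht.1 (Ioo_lbd_rbd_subset hG hfin ⟨hlt, lt_of_le_of_lt ht.2 hz.2⟩)

end comp

lemma exists_smallV (N : Set ℝ) (hN : volume N = 0) (W : Set ℝ) (hW : IsOpen W) (hNW : N ⊆ W)
    (a b : ℝ) :
    ∃ V : Set ℝ, IsOpen V ∧ N ∩ Set.Ioo a b ⊆ V ∧ V ⊆ Set.Ioo a b ∧ V ⊆ W ∧
      volume V ≤ ENNReal.ofReal (b - a) / 16 := by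
  rcases le_or_gt b a with hab | hab
  · exact ⟨∅, isOpen_empty, by simp [Set.Ioo_eq_empty_of_le hab], by simp, by simp, by simp⟩
  · have hpos : 0 < ENNReal.ofReal (b - a) / 16 := by
      apply ENNReal.div_pos
      · simp [sub_pos.mpr hab, ne_of_gt]
      · simp
    have hlt : volume (N ∩ Set.Ioo a b) < ENNReal.ofReal (b - a) / 16 := by
      have : volume (N ∩ Set.Ioo a b) = 0 :=
        le_antisymm (le_trans (measure_mono Set.inter_subset_left) hN.le) zero_le
      simpa [this] using hpos
    obtain ⟨U, hsub, hUopen, hUvol⟩ :=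
      Set.exists_isOpen_lt_of_lt (μ := volume) (N ∩ Set.Ioo a b) _ hlt
    refine ⟨U ∩ Set.Ioo a b ∩ W, (hUopen.inter isOpen_Ioo).inter hW, ?_, ?_, ?_, ?_⟩
    · intro t ht
      exact ⟨⟨hsub ht, ht.2⟩, hNW ht.1⟩
    · intro t ht; exact ht.1.2
    · intro t ht; exact ht.2
    · exact le_trans (measure_mono (fun t ht => ht.1.1)) hUvol.le

lemma step_lemma (N : Set ℝ) (hN : volume N = 0) (G : Set ℝ) (hG : IsOpen G) (hNG : N ⊆ G)
    (hfin : volume G ≠ ⊤) (δ : ℝ≥0∞) (hδ : 0 < δ) :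
    ∃ G' : Set ℝ, IsOpen G' ∧ N ⊆ G' ∧ G' ⊆ G ∧ volume G' ≤ δ ∧
      ∀ x ∈ G, volume (G' ∩ Set.Ioo (lbd G x) (rbd G x)) ≤
        ENNReal.ofReal (rbd G x - lbd G x) / 16 := by
  obtain ⟨W, hsubW, hWopen, hWvol⟩ :=
    Set.exists_isOpen_lt_of_lt (μ := volume) N δ (by simpa [hN] using hδ)
  choose v hv1 hv2 hv3 hv4 hv5 using exists_smallV N hN W hWopen hsubW
  refine ⟨⋃ x ∈ G, v (lbd G x) (rbd G x), isOpen_iUnion fun x => isOpen_iUnion fun _ => hv1 _ _,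
    ?_, ?_, ?_, ?_⟩
  · intro t ht
    have htG : t ∈ G := hNG ht
    refine Set.mem_iUnion.mpr ⟨t, Set.mem_iUnion.mpr ⟨htG, ?_⟩⟩
    exact hv2 _ _ ⟨ht, lbd_lt hG hfin htG, lt_rbd hG hfin htG⟩
  · intro t ht
    obtain ⟨x, hmem⟩ := Set.mem_iUnion.mp ht
    obtain ⟨hxG, htv⟩ := Set.mem_iUnion.mp hmem
    exact Ioo_lbd_rbd_subset hG hfin (hv3 _ _ htv)
  · refine le_trans (measure_mono ?_) hWvol.le
    intro t ht
    obtain ⟨x, hmem⟩ := Set.mem_iUnion.mp ht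
    obtain ⟨hxG, htv⟩ := Set.mem_iUnion.mp hmem
    exact hv4 _ _ htv
  · intro x hxG
    refine le_trans (measure_mono ?_) (hv5 (lbd G x) (rbd G x))
    intro t ht
    obtain ⟨htU, htIoo⟩ := ht
    obtain ⟨x', hmem⟩ := Set.mem_iUnion.mp htU
    obtain ⟨hx'G, htv⟩ := Set.mem_iUnion.mp hmem
    have htIoo' := hv3 _ _ htv
    have e1 : rbd G t = rbd G x' := rbd_const hG hfin htIoo'
    have e2 : lbd G t = lbd G x' := lbd_const hG hfin htIoo'
    have e3 : rbd G t = rbd G x := rbd_const hG hfin htIoo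
    have e4 : lbd G t = lbd G x := lbd_const hG hfin htIoo
    rw [← e4, e2, ← e3, e1]
    exact htv

lemma exists_Gseq (N : Set ℝ) (hN : volume N = 0) :
    ∃ G : ℕ → Set ℝ, (∀ k, IsOpen (G k)) ∧ (∀ k, N ⊆ G k) ∧
      (∀ k, volume (G k) ≤ (2 : ℝ≥0∞)⁻¹ ^ k) ∧ (∀ k, G (k + 1) ⊆ G k) ∧
      (∀ k, ∀ x ∈ G k, volume (G (k + 1) ∩ Set.Ioo (lbd (G k) x) (rbd (G k) x)) ≤
        ENNReal.ofReal (rbd (G k) x - lbd (G k) x) / 16) := by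
  have hstep : ∀ (k : ℕ) (S : Set ℝ), ∃ S' : Set ℝ,
      (IsOpen S ∧ N ⊆ S ∧ volume S ≤ (2 : ℝ≥0∞)⁻¹ ^ k) →
      (IsOpen S' ∧ N ⊆ S' ∧ S' ⊆ S ∧ volume S' ≤ (2 : ℝ≥0∞)⁻¹ ^ (k + 1) ∧
        ∀ x ∈ S, volume (S' ∩ Set.Ioo (lbd S x) (rbd S x)) ≤
          ENNReal.ofReal (rbd S x - lbd S x) / 16) := by
    intro k S
    by_cases h : IsOpen S ∧ N ⊆ S ∧ volume S ≤ (2 : ℝ≥0∞)⁻¹ ^ k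
    · obtain ⟨h1, h2, h3⟩ := h
      have hfin : volume S ≠ ⊤ := by
        intro habs
        rw [habs] at h3
        exact absurd (top_le_iff.mp h3) (by simp [ENNReal.pow_ne_top])
      obtain ⟨S', p1, p2, p3, p4, p5⟩ := step_lemma N hN S h1 h2 hfin ((2 : ℝ≥0∞)⁻¹ ^ (k + 1))
        (ENNReal.pow_pos (by simp) _)
      exact ⟨S', fun _ => ⟨p1, p2, p3, p4, p5⟩⟩
    · exact ⟨∅, fun hc => absurd hc h⟩
  choose f hf using hstep
  obtain ⟨W₀, hsubW₀, hW₀open, hW₀vol⟩ :=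
    Set.exists_isOpen_lt_of_lt (μ := volume) N 1 (by simp [hN])
  set G : ℕ → Set ℝ := fun k => Nat.rec W₀ (fun k Sk => f k Sk) k with hGdef
  have hG0 : G 0 = W₀ := rfl
  have hGsucc : ∀ k, G (k + 1) = f k (G k) := fun k => rfl
  have hinv : ∀ k, IsOpen (G k) ∧ N ⊆ G k ∧ volume (G k) ≤ (2 : ℝ≥0∞)⁻¹ ^ k := by
    intro k
    induction k with
    | zero => exact ⟨hW₀open, hsubW₀, by show volume W₀ ≤ (2 : ℝ≥0∞)⁻¹ ^ 0; simpa using hW₀vol.le⟩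
    | succ k ih =>
        obtain ⟨p1, p2, p3, p4, p5⟩ := hf k (G k) ih
        exact ⟨p1, p2, p4⟩
  refine ⟨G, fun k => (hinv k).1, fun k => (hinv k).2.1, fun k => (hinv k).2.2, ?_, ?_⟩
  · intro k
    exact (hf k (G k) (hinv k)).2.2.1
  · intro k
    exact (hf k (G k) (hinv k)).2.2.2.2

noncomputable def fA (A : Set ℝ) (x : ℝ) : ℝ := ∫ t in (0:ℝ)..x, A.indicator (fun _ => (1:ℝ)) t

lemma fA_interval_integrable (A : Set ℝ) (hA : MeasurableSet A) (a b : ℝ) :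
    IntervalIntegrable (A.indicator fun _ => (1 : ℝ)) volume a b := by
  rw [intervalIntegrable_iff]
  exact (MeasureTheory.integrableOn_const measure_Ioc_lt_top.ne).indicator hA

lemma fA_incr (A : Set ℝ) (hA : MeasurableSet A) {x y : ℝ} (hxy : x ≤ y) :
    fA A y - fA A x = (volume (A ∩ Set.Ioc x y)).toReal := by
  unfold fA
  rw [intervalIntegral.integral_interval_sub_left (fA_interval_integrable A hA 0 y)
    (fA_interval_integrable A hA 0 x), intervalIntegral.integral_of_le hxy,
    MeasureTheory.integral_indicator hA, MeasureTheory.setIntegral_const,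
    measureReal_restrict_apply hA, smul_eq_mul, mul_one, measureReal_def]

lemma fA_incr_le (A : Set ℝ) (hA : MeasurableSet A) {x y : ℝ} (hxy : x ≤ y) :
    fA A y - fA A x ≤ y - x := by
  rw [fA_incr A hA hxy]
  have h1 : volume (A ∩ Set.Ioc x y) ≤ ENNReal.ofReal (y - x) := by
    refine le_trans (measure_mono Set.inter_subset_right) ?_
    rw [Real.volume_Ioc]
  calc (volume (A ∩ Set.Ioc x y)).toReal ≤ (ENNReal.ofReal (y - x)).toReal :=
        ENNReal.toReal_mono ENNReal.ofReal_ne_top h1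
    _ = y - x := ENNReal.toReal_ofReal (by linarith)

lemma fA_incr_nonneg (A : Set ℝ) (hA : MeasurableSet A) {x y : ℝ} (hxy : x ≤ y) :
    0 ≤ fA A y - fA A x := by
  rw [fA_incr A hA hxy]; exact ENNReal.toReal_nonneg

lemma fA_lipschitz (A : Set ℝ) (hA : MeasurableSet A) : LipschitzWith 1 (fA A) := by
  refine LipschitzWith.of_dist_le_mul fun x y => ?_
  rw [NNReal.coe_one, one_mul, Real.dist_eq, Real.dist_eq]
  rcases le_total x y with h | h
  · rw [abs_sub_comm, abs_of_nonneg (fA_incr_nonneg A hA h), abs_of_nonpos (by linarith)]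
    linarith [fA_incr_le A hA h]
  · rw [abs_of_nonneg (fA_incr_nonneg A hA h), abs_of_nonneg (by linarith)]
    linarith [fA_incr_le A hA h]

lemma fA_slope (A : Set ℝ) (hA : MeasurableSet A) {x y : ℝ} (hxy : y ≠ x) :
    slope (fA A) x y = (volume (A ∩ Set.uIoc x y)).toReal / |y - x| := by
  rcases lt_or_gt_of_ne hxy with h | h
  · rw [slope_def_field, Set.uIoc_of_ge h.le, abs_of_neg (by linarith : y - x < 0)]
    have hv := fA_incr A hA h.le
    rw [div_eq_div_iff (by linarith : y - x ≠ 0) (by linarith : -(y - x) ≠ 0)]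
    linear_combination (y - x) * hv
  · rw [slope_def_field, Set.uIoc_of_le h.le, abs_of_pos (by linarith : (0:ℝ) < y - x),
      fA_incr A hA h.le]

theorem zahorski (N : Set ℝ) (hN : volume N = 0) :
    ∃ g : ℝ → ℝ, LipschitzWith 1 g ∧ ∀ t ∈ N, ¬DifferentiableAt ℝ g t := by
  obtain ⟨G, hopen, hsub, hvol, hnest, hcompbd⟩ := exists_Gseq N hN
  have hanti : Antitone G := antitone_nat_of_succ_le hnest
  obtain ⟨A, hAdef⟩ : ∃ A : Set ℝ, A = ⋃ k, (G (2 * k) \ G (2 * k + 1)) := ⟨_, rfl⟩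
  have hAmeas : MeasurableSet A := by
    rw [hAdef]
    exact MeasurableSet.iUnion fun k => ((hopen _).measurableSet.diff (hopen _).measurableSet)
  refine ⟨fA A, fA_lipschitz A hAmeas, ?_⟩
  intro x hxN hdiff
  have hGfin : ∀ m, volume (G m) ≠ ⊤ := fun m =>
    ne_top_of_le_ne_top (by simp [ENNReal.pow_ne_top]) (hvol m)
  have hxG : ∀ m, x ∈ G m := fun m => hsub m hxN
  obtain ⟨a, b, ha, hb⟩ : ∃ a b : ℕ → ℝ,
      (∀ m, a m = lbd (G m) x) ∧ (∀ m, b m = rbd (G m) x) := ⟨_, _, fun _ => rfl, fun _ => rfl⟩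
  obtain ⟨ℓ, hl⟩ : ∃ ℓ : ℕ → ℝ, ∀ m, ℓ m = b m - a m := ⟨_, fun _ => rfl⟩
  have hax : ∀ m, a m < x := fun m => (ha m) ▸ lbd_lt (hopen m) (hGfin m) (hxG m)
  have hxb : ∀ m, x < b m := fun m => (hb m) ▸ lt_rbd (hopen m) (hGfin m) (hxG m)
  have hlpos : ∀ m, 0 < ℓ m := fun m => by
    have h1 := hax m; have h2 := hxb m; rw [hl m]; linarith
  have hIooG : ∀ m, Set.Ioo (a m) (b m) ⊆ G m := fun m => by
    rw [ha m, hb m]; exact Ioo_lbd_rbd_subset (hopen m) (hGfin m)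
  have hcomp : ∀ m, volume (G (m + 1) ∩ Set.Ioo (a m) (b m)) ≤ ENNReal.ofReal (ℓ m) / 16 := by
    intro m
    rw [ha m, hb m, hl m, ha m, hb m]
    exact hcompbd m x (hxG m)
  have hlle : ∀ m, ℓ m ≤ (2 : ℝ)⁻¹ ^ m := by
    intro m
    have h1 : ENNReal.ofReal (ℓ m) ≤ (2 : ℝ≥0∞)⁻¹ ^ m := by
      rw [hl m, ← Real.volume_Ioo (a := a m) (b := b m)]
      exact le_trans (measure_mono (hIooG m)) (hvol m)
    have h2 : (2 : ℝ≥0∞)⁻¹ ^ m = ENNReal.ofReal ((2 : ℝ)⁻¹ ^ m) := by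
      rw [ENNReal.ofReal_pow (by norm_num)]
      congr 1
      rw [ENNReal.ofReal_inv_of_pos (by norm_num)]
      norm_num
    rw [h2, ENNReal.ofReal_le_ofReal_iff (by positivity)] at h1
    exact h1
  obtain ⟨y, hydef⟩ : ∃ y : ℕ → ℝ,
      ∀ m, y m = if x - a m ≥ b m - x then x - ℓ m / 4 else x + ℓ m / 4 := ⟨_, fun _ => rfl⟩
  have hyx : ∀ m, y m ≠ x := by
    intro m
    have h0 := hlpos m
    rw [hydef m]
    split_ifs <;> intro h <;> linarith
  have hyabs : ∀ m, |y m - x| = ℓ m / 4 := by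
    intro m
    have h0 := hlpos m
    rw [hydef m]
    split_ifs
    · rw [abs_of_neg (by linarith : x - ℓ m / 4 - x < 0)]; ring
    · rw [abs_of_pos (by linarith : (0:ℝ) < x + ℓ m / 4 - x)]; ring
  have hyIoo : ∀ m, Set.uIoc x (y m) ⊆ Set.Ioo (a m) (b m) := by
    intro m
    have h1 := hlpos m
    have h2 := hax m
    have h3 := hxb m
    have h4 := hl m
    rw [hydef m]
    split_ifs with hcase
    · rw [Set.uIoc_of_ge (by linarith : x - ℓ m / 4 ≤ x)]
      intro t ht
      exact ⟨by linarith [ht.1], by linarith [ht.2]⟩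
    · push_neg at hcase
      rw [Set.uIoc_of_le (by linarith : x ≤ x + ℓ m / 4)]
      intro t ht
      exact ⟨by linarith [ht.1], by linarith [ht.2]⟩
  have hvoluIoc : ∀ m, volume (Set.uIoc x (y m)) = ENNReal.ofReal (ℓ m / 4) := by
    intro m
    rcases le_total x (y m) with h | h
    · rw [Set.uIoc_of_le h, Real.volume_Ioc, ← hyabs m, abs_of_nonneg (by linarith : 0 ≤ y m - x)]
    · rw [Set.uIoc_of_ge h, Real.volume_Ioc, ← hyabs m,
        abs_of_nonpos (by linarith : y m - x ≤ 0), neg_sub]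
  have hsmall : ∀ m, volume (G (m + 1) ∩ Set.uIoc x (y m)) ≤ ENNReal.ofReal (ℓ m) / 16 := by
    intro m
    exact le_trans (measure_mono (Set.inter_subset_inter_right _ (hyIoo m))) (hcomp m)
  have hVfin : ∀ m, volume (A ∩ Set.uIoc x (y m)) ≠ ⊤ := by
    intro m
    refine ne_top_of_le_ne_top ?_ (measure_mono Set.inter_subset_right)
    rw [hvoluIoc m]
    exact ENNReal.ofReal_ne_top
  have heven : ∀ k, 3 / 4 ≤ slope (fA A) x (y (2 * k)) := by
    intro k
    have hcover : Set.uIoc x (y (2 * k)) ⊆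
        (A ∩ Set.uIoc x (y (2 * k))) ∪ (G (2 * k + 1) ∩ Set.uIoc x (y (2 * k))) := by
      intro t ht
      by_cases htG : t ∈ G (2 * k + 1)
      · exact Or.inr ⟨htG, ht⟩
      · refine Or.inl ⟨?_, ht⟩
        rw [hAdef]
        exact Set.mem_iUnion.mpr ⟨k, ⟨hIooG (2 * k) (hyIoo (2 * k) ht), htG⟩⟩
    have hineq : ENNReal.ofReal (ℓ (2 * k) / 4) ≤
        volume (A ∩ Set.uIoc x (y (2 * k))) + ENNReal.ofReal (ℓ (2 * k)) / 16 := by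
      rw [← hvoluIoc (2 * k)]
      exact le_trans (measure_mono hcover)
        (le_trans (measure_union_le _ _) (add_le_add le_rfl (hsmall (2 * k))))
    have htr : ℓ (2 * k) / 4 ≤ (volume (A ∩ Set.uIoc x (y (2 * k)))).toReal + ℓ (2 * k) / 16 := by
      have h1 := ENNReal.toReal_mono
        (ENNReal.add_ne_top.mpr ⟨hVfin (2 * k), by simp [ENNReal.div_eq_top]⟩) hineq
      rw [ENNReal.toReal_add (hVfin (2 * k)) (by simp [ENNReal.div_eq_top]), ENNReal.toReal_div,
        ENNReal.toReal_ofReal (by linarith [hlpos (2 * k)] : (0:ℝ) ≤ ℓ (2 * k) / 4),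
        ENNReal.toReal_ofReal (le_of_lt (hlpos (2 * k)))] at h1
      have h16 : ((16 : ℝ≥0∞)).toReal = (16 : ℝ) := by norm_num
      rw [h16] at h1
      linarith
    rw [fA_slope A hAmeas (hyx (2 * k)), hyabs (2 * k)]
    have hlp := hlpos (2 * k)
    rw [le_div_iff₀ (by linarith : (0:ℝ) < ℓ (2 * k) / 4)]
    linarith
  have hodd : ∀ k, slope (fA A) x (y (2 * k + 1)) ≤ 1 / 4 := by
    intro k
    have hAsub : A ∩ Set.uIoc x (y (2 * k + 1)) ⊆
        G (2 * k + 2) ∩ Set.uIoc x (y (2 * k + 1)) := by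
      intro t ht
      obtain ⟨htA, htI⟩ := ht
      rw [hAdef] at htA
      obtain ⟨j, htj⟩ := Set.mem_iUnion.mp htA
      have htm : t ∈ G (2 * k + 1) := hIooG (2 * k + 1) (hyIoo (2 * k + 1) htI)
      rcases le_or_gt j k with hj | hj
      · exact absurd (hanti (by omega : 2 * j + 1 ≤ 2 * k + 1) htm) htj.2
      · exact ⟨hanti (by omega : 2 * k + 2 ≤ 2 * j) htj.1, htI⟩
    have hineq : volume (A ∩ Set.uIoc x (y (2 * k + 1))) ≤ ENNReal.ofReal (ℓ (2 * k + 1)) / 16 :=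
      le_trans (le_trans (measure_mono hAsub)
        (measure_mono (Set.inter_subset_inter_right _ (hyIoo (2 * k + 1))))) (hcomp (2 * k + 1))
    have htr : (volume (A ∩ Set.uIoc x (y (2 * k + 1)))).toReal ≤ ℓ (2 * k + 1) / 16 := by
      have h1 := ENNReal.toReal_mono (by simp [ENNReal.div_eq_top]) hineq
      rw [ENNReal.toReal_div, ENNReal.toReal_ofReal (le_of_lt (hlpos (2 * k + 1)))] at h1
      have h16 : ((16 : ℝ≥0∞)).toReal = (16 : ℝ) := by norm_num
      rw [h16] at h1
      linarith
    rw [fA_slope A hAmeas (hyx (2 * k + 1)), hyabs (2 * k + 1)]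
    have hlp := hlpos (2 * k + 1)
    rw [div_le_div_iff₀ (by linarith : (0:ℝ) < ℓ (2 * k + 1) / 4) (by norm_num : (0:ℝ) < 4)]
    linarith [ENNReal.toReal_nonneg (a := volume (A ∩ Set.uIoc x (y (2 * k + 1))))]
  have hytend : Tendsto y atTop (𝓝 x) := by
    rw [tendsto_iff_dist_tendsto_zero]
    refine squeeze_zero (fun m => dist_nonneg) (fun m => ?_)
      (tendsto_pow_atTop_nhds_zero_of_lt_one (by norm_num) (by norm_num) :
        Tendsto (fun m : ℕ => ((2:ℝ)⁻¹) ^ m) atTop (𝓝 0))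
    rw [Real.dist_eq, hyabs m]
    linarith [hlle m, hlpos m]
  have hder : Tendsto (slope (fA A) x) (𝓝[≠] x) (𝓝 (deriv (fA A) x)) :=
    hasDerivAt_iff_tendsto_slope.mp hdiff.hasDerivAt
  have hcomp2 : ∀ s : ℕ → ℕ, Tendsto s atTop atTop →
      Tendsto (fun k => slope (fA A) x (y (s k))) atTop (𝓝 (deriv (fA A) x)) := by
    intro s hs
    refine hder.comp ?_
    refine tendsto_nhdsWithin_of_tendsto_nhds_of_eventually_within _ (hytend.comp hs) ?_
    exact Eventually.of_forall fun k => hyx (s k)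
  have hs1 : Tendsto (fun k : ℕ => 2 * k) atTop atTop :=
    tendsto_atTop_atTop_of_monotone (fun _ _ h => by omega) (fun n => ⟨n, by omega⟩)
  have hs2 : Tendsto (fun k : ℕ => 2 * k + 1) atTop atTop :=
    tendsto_atTop_atTop_of_monotone (fun _ _ h => by omega) (fun n => ⟨n, by omega⟩)
  have h34 : 3 / 4 ≤ deriv (fA A) x := ge_of_tendsto' (hcomp2 _ hs1) heven
  have h14 : deriv (fA A) x ≤ 1 / 4 := le_of_tendsto' (hcomp2 _ hs2) hodd
  linarith

theorem stmt4 (d : ℕ) (hd : 1 ≤ d) (E : Set (EuclideanSpace ℝ (Fin d)))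
    (hE : ∀ f : EuclideanSpace ℝ (Fin d) → ℝ, (∃ K : NNReal, LipschitzWith K f) →
      ∃ x ∈ E, DifferentiableAt ℝ f x) :
    1 ≤ dimH E := by
  by_contra hcon
  push_neg at hcon
  have hd0 : 0 < d := hd
  let i0 : Fin d := ⟨0, hd0⟩
  let π : EuclideanSpace ℝ (Fin d) →L[ℝ] ℝ := EuclideanSpace.proj i0
  have hdim : dimH ((π : EuclideanSpace ℝ (Fin d) → ℝ) '' E) ≤ dimH E :=
    π.lipschitz.dimH_image_le E
  have h1 : dimH ((π : EuclideanSpace ℝ (Fin d) → ℝ) '' E) < ((1 : ℝ≥0) : ℝ≥0∞) := by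
    refine lt_of_le_of_lt hdim ?_
    simpa using hcon
  have hH : μH[((1:ℝ≥0):ℝ)] ((π : EuclideanSpace ℝ (Fin d) → ℝ) '' E) = 0 :=
    hausdorffMeasure_of_dimH_lt h1
  have hvol : volume ((π : EuclideanSpace ℝ (Fin d) → ℝ) '' E) = 0 := by
    rw [← MeasureTheory.hausdorffMeasure_real]
    simpa using hH
  obtain ⟨g, hg, hnd⟩ := zahorski _ hvol
  obtain ⟨x, hxE, hdiff⟩ := hE (g ∘ π) ⟨1 * ‖π‖₊, hg.comp π.lipschitz⟩
  let σ : ℝ → EuclideanSpace ℝ (Fin d) := fun t => x + (t - π x) • EuclideanSpace.single i0 1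
  have hσx : σ (π x) = x := by simp [σ]
  have hσdiff : DifferentiableAt ℝ σ (π x) :=
    (differentiableAt_const x).add ((differentiableAt_id.sub_const _).smul_const _)
  have hπσ : ∀ t, π (σ t) = t := by
    intro t
    simp only [σ, map_add, _root_.map_smul, smul_eq_mul]
    have h2 : π (EuclideanSpace.single i0 1) = 1 := by
      show (EuclideanSpace.single i0 (1:ℝ)) i0 = 1
      simp [EuclideanSpace.single_apply]
    rw [h2]
    ring
  have hcompeq : (g ∘ (π : EuclideanSpace ℝ (Fin d) → ℝ)) ∘ σ = g := by
    funext t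
    simp only [Function.comp_apply, hπσ t]
  have hgdiff : DifferentiableAt ℝ g (π x) := by
    rw [← hcompeq]
    exact DifferentiableAt.comp (π x) (hσx.symm ▸ hdiff) hσdiff
  exact hnd (π x) ⟨x, hxE, rfl⟩ hgdiff
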